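/- Let w > 0 be a real number and d ≥ 1 an integer. Let f be a continuous map from the closed unit disk D̄ = {z ∈ ℂ : |z| ≤ 1} to ℂ^d which is holomorphic on the open unit disk. Suppose there exist three distinct points p₀, p₁, p₂ on the unit circle dividing it into three arcs A₀, A₁, A₂ such that f(A₀) ⊆ √−1·ℝ^d, f(A₁) ⊆ (1 + 2w√−1)·ℝ^d, and f(A₂) ⊆ (1 + w√−1)·ℝ^d, where for ζ ∈ ℂ we write ζ·ℝ^d := {(ζ x₁, …, ζ x_d) : (x₁, …, x_d) ∈ ℝ^d} ⊆ ℂ^d. Then f is constantly equal to 0. -/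

import Mathlib

open Metric Set MeasureTheory Complex

lemma line_volume_aux (v : ℂ) : volume (Submodule.span ℝ {v} : Set ℂ) = 0 := by
  apply Measure.addHaar_submodule
  by_cases hv : v = 0
  · simp [hv]
  · intro h
    have h1 : Module.finrank ℝ (Submodule.span ℝ {v}) = 1 := finrank_span_singleton hv
    rw [h, finrank_top] at h1
    simp [Complex.finrank_real_complex] at h1

lemma disk_boundary_lines_aux (g : ℂ → ℂ)
    (hc : ContinuousOn g (closedBall 0 1))
    (hd : DifferentiableOn ℂ g (ball 0 1))
    (V : Fin 6 → ℂ)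
    (hV : ∀ z ∈ sphere (0:ℂ) 1, ∃ i, ∃ x : ℝ, g z = V i * x) :
    ∃ c, ∀ z ∈ closedBall (0:ℂ) 1, g z = c := by
  have han : AnalyticOnNhd ℂ g (ball 0 1) := hd.analyticOnNhd isOpen_ball
  rcases han.is_constant_or_isOpen (convex_ball (0:ℂ) 1).isPreconnected with ⟨c, hcst⟩ | hopen
  · refine ⟨c, ?_⟩
    have hcl : closedBall (0:ℂ) 1 ⊆ closure (ball 0 1) := by
      rw [closure_ball (0:ℂ) one_ne_zero]
    have heq : Set.EqOn g (fun _ => c) (ball (0:ℂ) 1) := fun z hz => hcst z hz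
    exact heq.of_subset_closure hc continuousOn_const ball_subset_closedBall hcl
  · exfalso
    set U : Set ℂ := g '' ball 0 1 with hUdef
    have hUopen : IsOpen U := hopen _ (subset_refl _) isOpen_ball
    have hUne : U.Nonempty := ⟨g 0, 0, by simp, rfl⟩
    set B : Set ℂ := ⋃ i, (Submodule.span ℝ {V i} : Set ℂ) with hBdef
    have hB0 : volume B = 0 := measure_iUnion_null fun i => line_volume_aux (V i)
    have hgB : ∀ z ∈ sphere (0:ℂ) 1, g z ∈ B := by
      intro z hz
      obtain ⟨i, x, hx⟩ := hV z hz
      refine mem_iUnion.2 ⟨i, ?_⟩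
      rw [hx]
      exact Submodule.mem_span_singleton.2 ⟨x, by rw [Complex.real_smul]; ring⟩
    have hpos : 0 < volume (U \ B) := by
      rw [measure_diff_null hB0]
      exact hUopen.measure_pos volume hUne
    obtain ⟨q, hqU, hqB⟩ : (U \ B).Nonempty := nonempty_of_measure_ne_zero hpos.ne'
    have hq0 : q ≠ 0 := by
      rintro rfl
      exact hqB (mem_iUnion.2 ⟨0, Submodule.zero_mem _⟩)
    set K : Set ℂ := g '' closedBall 0 1 with hKdef
    have hKcpt : IsCompact K := (isCompact_closedBall (0:ℂ) 1).image_of_continuousOn hc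
    have hUK : U ⊆ K := image_mono (f := g) ball_subset_closedBall
    have hUint : U ⊆ interior K := interior_maximal hUK hUopen
    set R : Set ℂ := (fun t : ℝ => (t : ℂ) * q) '' Ici 1 with hRdef
    have hRpc : IsPreconnected R :=
      isPreconnected_Ici.image _ (Continuous.continuousOn (by continuity))
    have hqR : q ∈ R := ⟨1, by simp, by simp⟩
    have hRB : ∀ x ∈ R, x ∉ B := by
      rintro x ⟨t, ht, rfl⟩ hxB
      dsimp only at hxB
      obtain ⟨i, hi⟩ := mem_iUnion.1 hxB
      obtain ⟨a, ha⟩ := Submodule.mem_span_singleton.1 hi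
      apply hqB
      refine mem_iUnion.2 ⟨i, Submodule.mem_span_singleton.2 ⟨a / t, ?_⟩⟩
      have ht1 : (1:ℝ) ≤ t := ht
      have ht0 : (t : ℂ) ≠ 0 := Complex.ofReal_ne_zero.2 (by linarith)
      rw [Complex.real_smul] at ha ⊢
      push_cast
      field_simp
      linear_combination ha
    -- a point of R outside K
    obtain ⟨M, hM⟩ : ∃ M, K ⊆ closedBall 0 M := hKcpt.isBounded.subset_closedBall 0
    have hRout : ∃ x ∈ R, x ∉ K := by
      set t : ℝ := max 1 ((M + 1) / ‖q‖) with htdef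
      refine ⟨(t : ℂ) * q, ⟨t, Set.mem_Ici.2 (le_max_left 1 ((M + 1) / ‖q‖)), rfl⟩, fun hxK => ?_⟩
      have hnq : 0 < ‖q‖ := norm_pos_iff.2 hq0
      have h1 : ‖(t : ℂ) * q‖ = t * ‖q‖ := by
        rw [norm_mul, Complex.norm_real, Real.norm_eq_abs,
          abs_of_pos (lt_of_lt_of_le one_pos (le_max_left _ _))]
      have h2 : M + 1 ≤ t * ‖q‖ := by
        rw [← div_le_iff₀ hnq]
        exact le_max_right _ _
      have h3 := hM hxK
      rw [mem_closedBall, dist_zero_right, h1] at h3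
      linarith
    obtain ⟨r, hrR, hrK⟩ := hRout
    -- R meets the frontier of K
    have hfr : (R ∩ frontier K).Nonempty := by
      by_contra hemp
      rw [Set.not_nonempty_iff_eq_empty] at hemp
      have hsub : R ⊆ interior K ∪ (closure K)ᶜ := by
        intro x hx
        by_cases hxi : x ∈ interior K
        · exact Or.inl hxi
        · refine Or.inr fun hxc => ?_
          have : x ∈ R ∩ frontier K := ⟨hx, hxc, hxi⟩
          rw [hemp] at this
          exact this
      have h1 : (R ∩ interior K).Nonempty := ⟨q, hqR, hUint hqU⟩
      have h2 : (R ∩ (closure K)ᶜ).Nonempty :=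
        ⟨r, hrR, fun hrc => hrK (hKcpt.isClosed.closure_eq ▸ hrc)⟩
      obtain ⟨x, -, hx1, hx2⟩ :=
        hRpc (interior K) (closure K)ᶜ isOpen_interior isClosed_closure.isOpen_compl hsub h1 h2
      exact hx2 (subset_closure (interior_subset hx1))
    obtain ⟨x, hxR, hxF⟩ := hfr
    have hxK : x ∈ K := hKcpt.isClosed.closure_eq ▸ hxF.1
    have hxU : x ∉ U := fun h => hxF.2 (hUint h)
    obtain ⟨z, hz, rfl⟩ := hxK
    have hzs : z ∈ sphere (0:ℂ) 1 := by
      rw [mem_sphere_zero_iff_norm]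
      rcases lt_or_eq_of_le (mem_closedBall_zero_iff.1 hz) with h | h
      · exact absurd ⟨z, mem_ball_zero_iff.2 h, rfl⟩ hxU
      · exact h
    exact hRB _ hxR (hgB z hzs)

theorem holomorphic_triangle_component_constant
    (w : ℝ) (hw : 0 < w) (d : ℕ) (hd : 1 ≤ d)
    (f : ℂ → Fin d → ℂ)
    (hcont : ContinuousOn f (Metric.closedBall 0 1))
    (hdiff : DifferentiableOn ℂ f (Metric.ball 0 1))
    (p₀ p₁ p₂ : ℂ)
    (hp₀ : p₀ ∈ Metric.sphere (0 : ℂ) 1)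
    (hp₁ : p₁ ∈ Metric.sphere (0 : ℂ) 1)
    (hp₂ : p₂ ∈ Metric.sphere (0 : ℂ) 1)
    (hne : p₀ ≠ p₁ ∧ p₀ ≠ p₂ ∧ p₁ ≠ p₂)
    (A₀ A₁ A₂ : Set ℂ)
    (hconn : IsConnected A₀ ∧ IsConnected A₁ ∧ IsConnected A₂)
    (hdisj : Disjoint A₀ A₁ ∧ Disjoint A₀ A₂ ∧ Disjoint A₁ A₂)
    (hunion : A₀ ∪ A₁ ∪ A₂ = Metric.sphere (0 : ℂ) 1 \ {p₀, p₁, p₂})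
    (hf₀ : ∀ z ∈ A₀, ∀ k : Fin d, ∃ x : ℝ, f z k = Complex.I * (x : ℂ))
    (hf₁ : ∀ z ∈ A₁, ∀ k : Fin d, ∃ x : ℝ,
      f z k = (1 + (2 * w : ℝ) * Complex.I) * (x : ℂ))
    (hf₂ : ∀ z ∈ A₂, ∀ k : Fin d, ∃ x : ℝ,
      f z k = (1 + (w : ℝ) * Complex.I) * (x : ℂ)) :
    ∀ z ∈ Metric.closedBall (0 : ℂ) 1, f z = 0 := by
  intro z hz
  funext k
  -- the k-th component
  set g : ℂ → ℂ := fun z => f z k with hgdef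
  have hgc : ContinuousOn g (closedBall 0 1) := by
    exact (continuous_apply k).comp_continuousOn hcont
  have hgd : DifferentiableOn ℂ g (ball 0 1) := differentiableOn_pi.1 hdiff k
  set V : Fin 6 → ℂ := ![Complex.I, 1 + (2 * w : ℝ) * Complex.I, 1 + (w : ℝ) * Complex.I,
    f p₀ k, f p₁ k, f p₂ k] with hVdef
  have hV : ∀ y ∈ sphere (0:ℂ) 1, ∃ i, ∃ x : ℝ, g y = V i * x := by
    intro y hy
    by_cases hmem : y ∈ ({p₀, p₁, p₂} : Set ℂ)
    · rcases hmem with rfl | rfl | rfl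
      · refine ⟨3, 1, ?_⟩
        have : V 3 = f y k := rfl
        rw [this, Complex.ofReal_one, mul_one]
      · refine ⟨4, 1, ?_⟩
        have : V 4 = f y k := rfl
        rw [this, Complex.ofReal_one, mul_one]
      · refine ⟨5, 1, ?_⟩
        have : V 5 = f y k := rfl
        rw [this, Complex.ofReal_one, mul_one]
    · have : y ∈ A₀ ∪ A₁ ∪ A₂ := hunion ▸ ⟨hy, hmem⟩
      rcases this with (hy0 | hy1) | hy2
      · obtain ⟨x, hx⟩ := hf₀ y hy0 k
        exact ⟨0, x, by simpa [hVdef, Matrix.cons_val_succ] using hx⟩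
      · obtain ⟨x, hx⟩ := hf₁ y hy1 k
        exact ⟨1, x, by simpa [hVdef, Matrix.cons_val_succ] using hx⟩
      · obtain ⟨x, hx⟩ := hf₂ y hy2 k
        exact ⟨2, x, by simpa [hVdef, Matrix.cons_val_succ] using hx⟩
  obtain ⟨c, hc⟩ := disk_boundary_lines_aux g hgc hgd V hV
  -- points on two different arcs
  have hsub : A₀ ∪ A₁ ∪ A₂ ⊆ closedBall (0:ℂ) 1 := by
    rw [hunion]
    exact fun y hy => sphere_subset_closedBall hy.1
  obtain ⟨z₀, hz₀⟩ := hconn.1.nonempty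
  obtain ⟨z₁, hz₁⟩ := hconn.2.1.nonempty
  obtain ⟨x, hx⟩ := hf₀ z₀ hz₀ k
  obtain ⟨y, hy⟩ := hf₁ z₁ hz₁ k
  have e₀ : c = Complex.I * x := by
    rw [← hx]
    exact (hc z₀ (hsub (Or.inl (Or.inl hz₀)))).symm
  have e₁ : c = (1 + (2 * w : ℝ) * Complex.I) * y := by
    rw [← hy]
    exact (hc z₁ (hsub (Or.inl (Or.inr hz₁)))).symm
  have hyre : c.re = y := by
    rw [e₁]
    simp [Complex.add_re, Complex.mul_re]
  have hxre : c.re = 0 := by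
    rw [e₀]
    simp [Complex.mul_re]
  have hc0 : c = 0 := by
    rw [e₁, hyre.symm.trans hxre]
    simp
  show g z = 0
  rw [hc z hz, hc0]
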